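/- Let G be a graph with vertex energies E(i) and energy E(G) = Σ_i E(i). Suppose for each vertex i and each neighbor j of i a weight p_i^j ∈ [0,1] is given with Σ_{j ∈ N(i)} p_i^j = 1. Then E(G) ≥ 2 Σ_{(i,j) ∈ E(G)} √(p_i^j · p_j^i). -/

import Mathlib

open Finset Matrix

noncomputable section

variable {V : Type*} [Fintype V] [DecidableEq V]

/-- The adjacency matrix of a simple graph is Hermitian (over ℝ). -/
theorem SimpleGraph.isHermitian_adjMatrix' (G : SimpleGraph V) [DecidableRel G.Adj] :
    (G.adjMatrix ℝ).IsHermitian := by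
  rw [Matrix.IsHermitian, Matrix.conjTranspose_eq_transpose_of_trivial]
  exact G.isSymm_adjMatrix

/-- The energy of a graph: the sum of the absolute values of the
eigenvalues of its adjacency matrix. -/
def SimpleGraph.energy (G : SimpleGraph V) [DecidableRel G.Adj] : ℝ :=
  ∑ k, |G.isHermitian_adjMatrix'.eigenvalues k|

/-- The Randić index of a graph: the sum over the (unordered) edges `(i,j)`
of `1/√(deg i · deg j)`. -/
def SimpleGraph.randic (G : SimpleGraph V) [DecidableRel G.Adj] : ℝ :=
  ∑ e ∈ G.edgeFinset,
    Sym2.lift ⟨fun i j => 1 / Real.sqrt (G.degree i * G.degree j),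
      fun i j => by simp [mul_comm]⟩ e

end

section AuxDartSum
variable {V : Type*} [Fintype V] [DecidableEq V]

lemma dart_sum_eq_two_mul (G : SimpleGraph V) [DecidableRel G.Adj]
    (f : V → V → ℝ) (hf : ∀ i j, f i j = f j i) :
    ∑ d : G.Dart, f d.fst d.snd = 2 * ∑ e ∈ G.edgeFinset, Sym2.lift ⟨f, hf⟩ e := by
  rw [← Finset.sum_fiberwise_of_maps_to
      (g := SimpleGraph.Dart.edge) (fun d _ => (SimpleGraph.mem_edgeFinset).2 d.edge_mem)
      (f := fun d : G.Dart => f d.fst d.snd), Finset.mul_sum]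
  refine Finset.sum_congr rfl fun e he => ?_
  rw [SimpleGraph.mem_edgeFinset] at he
  induction e with
  | _ v w =>
    let d : G.Dart := ⟨(v, w), he⟩
    have hfib : Finset.univ.filter (fun d' : G.Dart => d'.edge = s(v, w)) = {d, d.symm} := by
      have := d.edge_fiber
      exact this
    rw [hfib, Finset.sum_insert (by simp [d.symm_ne.symm]), Finset.sum_singleton]
    simp [d, hf w v]
    ring

lemma dart_sum_eq_sum_neighbors (G : SimpleGraph V) [DecidableRel G.Adj]
    (f : V → V → ℝ) :
    ∑ d : G.Dart, f d.fst d.snd = ∑ i, ∑ j ∈ G.neighborFinset i, f i j := by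
  rw [← Finset.sum_fiberwise_of_maps_to
      (g := fun d : G.Dart => d.fst) (fun d _ => Finset.mem_univ _)
      (f := fun d : G.Dart => f d.fst d.snd)]
  refine Finset.sum_congr rfl fun v _ => ?_
  have hfib : Finset.univ.filter (fun d : G.Dart => d.fst = v)
      = Finset.univ.image (G.dartOfNeighborSet v) := by
    have := G.dart_fst_fiber v
    simpa using this
  rw [hfib, Finset.sum_image (fun x _ y _ h => G.dartOfNeighborSet_injective v h)]
  show ∑ w : G.neighborSet v, f v w = _
  rw [Finset.sum_set_coe]; rfl

end AuxDartSum

section AuxSpec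
variable {n : Type*} [Fintype n] [DecidableEq n] {A : Matrix n n ℝ} (hA : A.IsHermitian)

lemma aux_col_norm (k : n) :
    ∑ i, ((hA.eigenvectorUnitary : Matrix n n ℝ) i k)^2 = 1 := by
  have h1 : (star (hA.eigenvectorUnitary : Matrix n n ℝ) *
      (hA.eigenvectorUnitary : Matrix n n ℝ)) k k = (1 : Matrix n n ℝ) k k := by
    rw [Unitary.coe_star_mul_self]
  simpa [Matrix.mul_apply, Matrix.one_apply, pow_two] using h1

lemma aux_entry_formula (i j : n) :
    A i j = ∑ k, hA.eigenvalues k *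
      ((hA.eigenvectorUnitary : Matrix n n ℝ) i k * (hA.eigenvectorUnitary : Matrix n n ℝ) j k) := by
  conv_lhs => rw [hA.spectral_theorem, Unitary.conjStarAlgAut_apply]
  rw [Matrix.mul_apply]
  refine Finset.sum_congr rfl fun k _ => ?_
  rw [Matrix.mul_diagonal]
  simp [Matrix.star_apply]
  ring

end AuxSpec

/-- If to every vertex `i` and every neighbour `j` of `i` a weight `p i j ∈ [0,1]` is
assigned, with the weights at each (non-isolated) vertex summing to `1`, then
`E(G) ≥ 2 ∑_{(i,j) ∈ E(G)} √(p i j · p j i)`. -/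
theorem stmt1 {V : Type*} [Fintype V] [DecidableEq V]
    (G : SimpleGraph V) [DecidableRel G.Adj]
    (p : V → V → ℝ)
    (hp0 : ∀ i j, G.Adj i j → 0 ≤ p i j)
    (hp1 : ∀ i j, G.Adj i j → p i j ≤ 1)
    (hsum : ∀ i, (G.neighborFinset i).Nonempty →
      ∑ j ∈ G.neighborFinset i, p i j = 1) :
    2 * ∑ e ∈ G.edgeFinset,
        Sym2.lift ⟨fun i j => Real.sqrt (p i j * p j i),
          fun i j => by simp [mul_comm]⟩ e
      ≤ G.energy := by
  classical
  have hA := G.isHermitian_adjMatrix'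
  set U : Matrix V V ℝ := (hA.eigenvectorUnitary : Matrix V V ℝ) with hU
  set lam : V → ℝ := hA.eigenvalues with hlam
  set F : V → ℝ := fun i => ∑ k, |lam k| * (U i k)^2 with hF
  have hF0 : ∀ i, 0 ≤ F i := fun i => Finset.sum_nonneg fun k _ => by positivity
  have hE : G.energy = ∑ i, F i := by
    show (∑ k, |lam k|) = _
    calc ∑ k, |lam k| = ∑ k, |lam k| * ∑ i, (U i k)^2 := by
          refine Finset.sum_congr rfl fun k _ => ?_
          rw [aux_col_norm hA k, mul_one]
      _ = ∑ k, ∑ i, |lam k| * (U i k)^2 := by simp [Finset.mul_sum]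
      _ = ∑ i, ∑ k, |lam k| * (U i k)^2 := Finset.sum_comm
  have hedge : ∀ i j, G.Adj i j → 1 ≤ F i * F j := by
    intro i j hij
    have h1 : (1:ℝ) ≤ ∑ k, |lam k| * (|U i k| * |U j k|) := by
      have e1 : (1:ℝ) = ∑ k, lam k * (U i k * U j k) := by
        have := aux_entry_formula hA i j
        rw [← this]; simp [hij]
      calc (1:ℝ) = ∑ k, lam k * (U i k * U j k) := e1
        _ ≤ |∑ k, lam k * (U i k * U j k)| := le_abs_self _
        _ ≤ ∑ k, |lam k * (U i k * U j k)| := Finset.abs_sum_le_sum_abs _ _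
        _ = ∑ k, |lam k| * (|U i k| * |U j k|) := by simp [abs_mul]
    have h3 := Finset.sum_mul_sq_le_sq_mul_sq Finset.univ
        (fun k => Real.sqrt |lam k| * |U i k|) (fun k => Real.sqrt |lam k| * |U j k|)
    have hl : ∑ k, (Real.sqrt |lam k| * |U i k|) * (Real.sqrt |lam k| * |U j k|)
        = ∑ k, |lam k| * (|U i k| * |U j k|) := by
      refine Finset.sum_congr rfl fun k _ => ?_
      rw [show (Real.sqrt |lam k| * |U i k|) * (Real.sqrt |lam k| * |U j k|)
          = (Real.sqrt |lam k| * Real.sqrt |lam k|) * (|U i k| * |U j k|) by ring,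
        Real.mul_self_sqrt (abs_nonneg _)]
    have hr1 : ∑ k, (Real.sqrt |lam k| * |U i k|)^2 = F i := by
      refine Finset.sum_congr rfl fun k _ => ?_
      rw [mul_pow, Real.sq_sqrt (abs_nonneg _), sq_abs]
    have hr2 : ∑ k, (Real.sqrt |lam k| * |U j k|)^2 = F j := by
      refine Finset.sum_congr rfl fun k _ => ?_
      rw [mul_pow, Real.sq_sqrt (abs_nonneg _), sq_abs]
    rw [hl, hr1, hr2] at h3
    nlinarith
  have key : ∀ i j, G.Adj i j →
      2 * Real.sqrt (p i j * p j i) ≤ p i j * F i + p j i * F j := by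
    intro i j hij
    have ha := hp0 i j hij
    have hb := hp0 j i hij.symm
    have h1 : Real.sqrt (p i j * p j i) ≤ Real.sqrt (p i j * F i) * Real.sqrt (p j i * F j) := by
      rw [← Real.sqrt_mul (by positivity)]
      apply Real.sqrt_le_sqrt
      have hee := hedge i j hij
      nlinarith [mul_nonneg ha hb]
    have h2 : 2 * (Real.sqrt (p i j * F i) * Real.sqrt (p j i * F j))
        ≤ p i j * F i + p j i * F j := by
      nlinarith [Real.sq_sqrt (mul_nonneg ha (hF0 i)), Real.sq_sqrt (mul_nonneg hb (hF0 j)),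
        sq_nonneg (Real.sqrt (p i j * F i) - Real.sqrt (p j i * F j))]
    linarith
  calc 2 * ∑ e ∈ G.edgeFinset,
        Sym2.lift ⟨fun i j => Real.sqrt (p i j * p j i),
          fun i j => by simp [mul_comm]⟩ e
      = ∑ d : G.Dart, Real.sqrt (p d.fst d.snd * p d.snd d.fst) :=
        (dart_sum_eq_two_mul G (fun i j => Real.sqrt (p i j * p j i))
          (fun i j => by simp [mul_comm])).symm
    _ ≤ ∑ d : G.Dart, (p d.fst d.snd * F d.fst + p d.snd d.fst * F d.snd) / 2 :=
        Finset.sum_le_sum fun d _ => by have := key d.fst d.snd d.adj; linarith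
    _ = ∑ d : G.Dart, p d.fst d.snd * F d.fst := by
        have hswap : ∑ d : G.Dart, p d.snd d.fst * F d.snd
            = ∑ d : G.Dart, p d.fst d.snd * F d.fst := by
          apply Fintype.sum_bijective SimpleGraph.Dart.symm
            (SimpleGraph.Dart.symm_involutive.bijective)
          intro d; simp
        calc ∑ d : G.Dart, (p d.fst d.snd * F d.fst + p d.snd d.fst * F d.snd) / 2
            = ((∑ d : G.Dart, p d.fst d.snd * F d.fst)
              + ∑ d : G.Dart, p d.snd d.fst * F d.snd) / 2 := by
              rw [← Finset.sum_add_distrib, ← Finset.sum_div]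
          _ = _ := by rw [hswap]; ring
    _ = ∑ i, ∑ j ∈ G.neighborFinset i, p i j * F i :=
        dart_sum_eq_sum_neighbors G (fun i j => p i j * F i)
    _ ≤ ∑ i, F i := by
        refine Finset.sum_le_sum fun i _ => ?_
        rcases (G.neighborFinset i).eq_empty_or_nonempty with h | h
        · simp [h, hF0 i]
        · rw [← Finset.sum_mul, hsum i h, one_mul]
    _ = G.energy := hE.symm
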